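/- In a partial cube, if C is a closed walk containing an edge uv, then C contains at least two edges (counted with multiplicity along the walk) that are in relation Θ with uv. -/
import Mathlib

open SimpleGraph

/-- A partial cube: a connected graph admitting an isometric embedding into a hypercube,
i.e. an injective map to `{0,1}^n` such that Hamming distance equals graph distance. -/
def IsPartialCube {V : Type} (G : SimpleGraph V) : Prop :=
  G.Connected ∧ ∃ (n : ℕ) (f : V → (Fin n → Bool)),
    Function.Injective f ∧ ∀ u v : V, hammingDist (f u) (f v) = G.dist u v

/-- The Djoković–Winkler relation on (ordered representatives of) edges:
`ab Θ xy` iff `d(a,x)+d(b,y) ≠ d(a,y)+d(b,x)`. -/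
def theta {V : Type} (G : SimpleGraph V) (a b x y : V) : Prop :=
  G.dist a x + G.dist b y ≠ G.dist a y + G.dist b x

open Finset in
lemma hd_eq_sum {n : ℕ} (a b : Fin n → Bool) :
    hammingDist a b = ∑ j, (if a j = b j then 0 else 1) := by
  rw [hammingDist, Finset.card_filter]
  simp [ite_not]

open Finset in
lemma key_theta {V : Type} (G : SimpleGraph V) {n : ℕ} {f : V → Fin n → Bool}
    (hf : ∀ u v : V, hammingDist (f u) (f v) = G.dist u v)
    {u v : V} {i : Fin n} (hi : f u i ≠ f v i)
    (hother : ∀ j, j ≠ i → f u j = f v j) (x y : V) :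
    theta G u v x y ↔ f x i ≠ f y i := by
  unfold theta
  rw [← hf, ← hf, ← hf, ← hf, hd_eq_sum, hd_eq_sum, hd_eq_sum, hd_eq_sum,
    ← Finset.sum_add_distrib, ← Finset.sum_add_distrib,
    ← Finset.add_sum_erase _ _ (Finset.mem_univ i),
    ← Finset.add_sum_erase _ _ (Finset.mem_univ i)]
  have hrest : ∑ j ∈ Finset.univ.erase i,
      ((if f u j = f x j then 0 else 1) + if f v j = f y j then 0 else 1)
    = ∑ j ∈ Finset.univ.erase i,
      ((if f u j = f y j then 0 else 1) + if f v j = f x j then 0 else 1) := by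
    apply Finset.sum_congr rfl
    intro j hj
    rw [hother j (Finset.mem_erase.mp hj).1]
    ring
  rw [hrest]
  simp only [ne_eq, Nat.add_right_cancel_iff]
  revert hi
  cases f u i <;> cases f v i <;> cases f x i <;> cases f y i <;> simp

lemma walk_parity {V : Type} (G : SimpleGraph V) {n : ℕ} (f : V → Fin n → Bool)
    (i : Fin n) {a b : V} (p : G.Walk a b) :
    (f a i = f b i) ↔ Even ((p.darts.filter
      (fun d => f d.toProd.1 i ≠ f d.toProd.2 i)).length) := by
  induction p with
  | nil => simp
  | cons h p ih =>
    rename_i w₁ w₂ w₃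
    simp only [SimpleGraph.Walk.darts_cons, List.filter_cons]
    by_cases hc : f w₁ i = f w₂ i
    · rw [if_neg (by simp [hc])]
      rw [hc]; exact ih
    · rw [if_pos (by simp [hc])]
      simp only [List.length_cons, Nat.even_add_one, ← ih]
      cases hx : f w₁ i <;> cases hy : f w₂ i <;> cases hz : f w₃ i <;> simp_all

open scoped Classical in
/-- In a partial cube, a closed walk containing an edge `uv` passes through at least
two edges (with multiplicity) that are in relation Θ with `uv`. -/
theorem closedWalk_two_theta_edges {V : Type} (G : SimpleGraph V)
    (hG : IsPartialCube G) {x u v : V} (hadj : G.Adj u v)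
    (c : G.Walk x x) (huv : s(u, v) ∈ c.edges) :
    2 ≤ (c.darts.filter
      (fun d => theta G u v d.toProd.1 d.toProd.2)).length := by
  obtain ⟨hconn, n, f, hinj, hf⟩ := hG
  have hdist1 : G.dist u v = 1 := SimpleGraph.dist_eq_one_iff_adj.mpr hadj
  have hhd : hammingDist (f u) (f v) = 1 := by rw [hf, hdist1]
  have hcard : ({j | f u j ≠ f v j} : Finset (Fin n)).card = 1 := hhd
  obtain ⟨i, hieq⟩ := Finset.card_eq_one.mp hcard
  have hi : f u i ≠ f v i := by
    have : i ∈ ({j | f u j ≠ f v j} : Finset (Fin n)) := hieq ▸ Finset.mem_singleton_self i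
    simpa using this
  have hother : ∀ j, j ≠ i → f u j = f v j := by
    intro j hj
    by_contra hne
    have : j ∈ ({j | f u j ≠ f v j} : Finset (Fin n)) := by simpa using hne
    rw [hieq, Finset.mem_singleton] at this
    exact hj this
  have hthetaiff := key_theta G hf hi hother
  have hfilter : (c.darts.filter (fun d => theta G u v d.toProd.1 d.toProd.2))
      = (c.darts.filter (fun d => f d.toProd.1 i ≠ f d.toProd.2 i)) := by
    apply List.filter_congr
    intro d _
    rw [decide_eq_decide]
    exact hthetaiff d.toProd.1 d.toProd.2
  rw [hfilter]
  have heven : Even ((c.darts.filter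
      (fun d => f d.toProd.1 i ≠ f d.toProd.2 i)).length) :=
    (walk_parity G f i c).mp rfl
  have huv' : s(u, v) ∈ c.darts.map SimpleGraph.Dart.edge := huv
  obtain ⟨d, hd, hde⟩ := List.mem_map.mp huv'
  obtain ⟨⟨p, q⟩, hadjd⟩ := d
  have hcases : (p = u ∧ q = v) ∨ (p = v ∧ q = u) := by
    simpa [SimpleGraph.Dart.edge, Sym2.eq_iff] using hde
  have hflip : f p i ≠ f q i := by
    rcases hcases with ⟨h1, h2⟩ | ⟨h1, h2⟩
    · rw [h1, h2]; exact hi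
    · rw [h1, h2]; exact fun h => hi h.symm
  have hmem : (⟨(p, q), hadjd⟩ : G.Dart) ∈
      c.darts.filter (fun d => f d.toProd.1 i ≠ f d.toProd.2 i) := by
    rw [List.mem_filter]
    exact ⟨hd, by simpa using hflip⟩
  have hpos : 0 < (c.darts.filter (fun d => f d.toProd.1 i ≠ f d.toProd.2 i)).length :=
    List.length_pos_of_mem hmem
  obtain ⟨r, hr⟩ := heven
  omega
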